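/- Let T be a finite multiset of k-tuples admitting a nice partial c-coloring, and let R be a submultiset of T obtained by keeping, for each distinct k-tuple occurring in T, at most c copies (and at least min(c, multiplicity in T) copies). Then R admits a nice partial c-coloring. -/
import Mathlib


/-- `f` is a *nice partial `c`-coloring* of the multiset `T` of tuples: the color
classes `f j` form disjoint submultisets of `T` (some tuples may stay uncolored), and
for each color `j` and every element `i` appearing in some tuple of `T` there is a
tuple of color `j` not containing `i`. -/
def NicePartialColoring (c : ℕ) (T : Multiset (Finset ℕ+))
    (f : Fin c → Multiset (Finset ℕ+)) : Prop :=
  (∑ j, f j) ≤ T ∧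
  ∀ j : Fin c, ∀ i : ℕ+, (∃ t ∈ T, i ∈ t) → ∃ t ∈ f j, i ∉ t

/-- Let `T` be a finite multiset of `k`-tuples admitting a nice partial `c`-coloring,
and let `R` be a submultiset of `T` obtained by keeping, for each distinct tuple
occurring in `T`, at most `c` copies and at least `min c (multiplicity in T)` copies.
Then `R` admits a nice partial `c`-coloring (niceness taken with respect to the
elements appearing in tuples of `T`). -/
theorem nice_partial_coloring_of_truncated
    (k c : ℕ) (T R : Multiset (Finset ℕ+)) (hT : ∀ t ∈ T, t.card = k)
    (hRT : R ≤ T)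
    (hRc : ∀ t : Finset ℕ+, R.count t ≤ c)
    (hRmin : ∀ t : Finset ℕ+, min c (T.count t) ≤ R.count t)
    (g : Fin c → Multiset (Finset ℕ+)) (hg : NicePartialColoring c T g) :
    ∃ h : Fin c → Multiset (Finset ℕ+),
      (∑ j, h j) ≤ R ∧
      ∀ j : Fin c, ∀ i : ℕ+, (∃ t ∈ T, i ∈ t) → ∃ t ∈ h j, i ∉ t := by
  obtain ⟨hle, hnice⟩ := hg
  refine ⟨fun j => (g j).dedup, ?_, ?_⟩
  · rw [Multiset.le_iff_count]
    intro t
    rw [Multiset.count_sum']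
    have h1 : ∑ j, ((g j).dedup.count t) ≤ c := by
      calc ∑ j, ((g j).dedup.count t) ≤ ∑ _j : Fin c, 1 :=
            Finset.sum_le_sum (fun j _ => by
              rw [Multiset.count_dedup]; split <;> simp)
        _ = c := by simp
    have h2 : ∑ j, ((g j).dedup.count t) ≤ T.count t := by
      calc ∑ j, ((g j).dedup.count t) ≤ ∑ j, (g j).count t :=
            Finset.sum_le_sum (fun j _ => by
              rw [Multiset.count_dedup]; split
              · exact Multiset.one_le_count_iff_mem.2 (by assumption)
              · exact Nat.zero_le _)
        _ = (∑ j, g j).count t := Multiset.count_sum'.symm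
        _ ≤ T.count t := Multiset.count_le_of_le t hle
    exact le_trans (le_min h1 h2) (hRmin t)
  · intro j i hi
    obtain ⟨t, ht, hit⟩ := hnice j i hi
    exact ⟨t, Multiset.mem_dedup.2 ht, hit⟩
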